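/- Let Ξ ⊂ F² be a generalized x-tower set with index lower set S = L_x(m₀,…,m_ν), m₀ > ⋯ > m_ν ≥ 0. Then the evaluation map F[x,y] → F^{|Ξ|} restricted to span{x^i y^j : (i,j) ∈ S} is a linear isomorphism; i.e., the monomials {x^i y^j : (i,j) ∈ S} form an interpolation basis: for any values f_{mn} ∈ F there is a unique p ∈ span{x^i y^j : (i,j) ∈ S} with p(u_{mn}) = f_{mn} for all (m,n) ∈ S. -/

import Mathlib

open MvPolynomial

section Aux

open Polynomial Finset

variable {F : Type*} [Field F]

private lemma tower_van_zero (q : Polynomial F) (M : ℕ) (xs : ℕ → F)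
    (hinj : ∀ i i', i ≤ M → i' ≤ M → xs i = xs i' → i = i')
    (hdeg : q.natDegree ≤ M) (hev : ∀ i, i ≤ M → q.eval (xs i) = 0) : q = 0 := by
  classical
  apply Polynomial.eq_zero_of_natDegree_lt_card_of_eval_eq_zero' q ((range (M + 1)).image xs)
  · intro z hz
    simp only [mem_image, mem_range] at hz
    obtain ⟨i, hi, rfl⟩ := hz
    exact hev i (Nat.lt_succ_iff.mp hi)
  · rw [Finset.card_image_of_injOn (fun a ha b hb h =>
      hinj a b (Nat.lt_succ_iff.mp (mem_range.mp ha)) (Nat.lt_succ_iff.mp (mem_range.mp hb)) h)]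
    simpa using Nat.lt_succ_of_le hdeg

private lemma tower_m_mono (ν : ℕ) (m : ℕ → ℕ) (hm : ∀ j, j < ν → m (j + 1) < m j) :
    ∀ j j', j ≤ j' → j' ≤ ν → m j' ≤ m j := by
  intro j j' hjj' hj'
  induction j', hjj' using Nat.le_induction with
  | base => exact le_rfl
  | succ k hk ih => exact le_trans (le_of_lt (hm k (by omega))) (ih (by omega))

private lemma tower_key : ∀ (ν : ℕ) (m : ℕ → ℕ) (y : ℕ → F) (xc : ℕ → ℕ → F),
    (∀ j, j < ν → m (j + 1) < m j) →
    (∀ j j', j ≤ ν → j' ≤ ν → y j = y j' → j = j') →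
    (∀ n, n ≤ ν → ∀ i i', i ≤ m n → i' ≤ m n → xc n i = xc n i' → i = i') →
    ∀ p : ℕ → Polynomial F, (∀ j, j ≤ ν → (p j).natDegree ≤ m j) →
    (∀ n, n ≤ ν → ∀ i, i ≤ m n →
      ∑ j ∈ range (ν + 1), (p j).eval (xc n i) * (y n) ^ j = 0) →
    ∀ j, j ≤ ν → p j = 0 := by
  intro ν
  induction ν with
  | zero =>
    intro m y xc _ _ hxc p hdeg hvan j hj
    interval_cases j
    apply tower_van_zero (p 0) (m 0) (xc 0) (hxc 0 le_rfl) (hdeg 0 le_rfl)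
    intro i hi
    have := hvan 0 le_rfl i hi
    simpa using this
  | succ ν IH =>
    intro m y xc hm hy hxc p hdeg hvan
    have hmono := tower_m_mono (ν + 1) m hm
    set c := y 0 with hc
    set g : Polynomial F := ∑ j ∈ range (ν + 2), Polynomial.C (c ^ j) * p j with hgdef
    have hgev : ∀ x : F, g.eval x = ∑ j ∈ range (ν + 2), (p j).eval x * c ^ j := by
      intro x
      rw [hgdef, Polynomial.eval_finset_sum]
      exact Finset.sum_congr rfl (by intros; simp [mul_comm])
    have hg : g = 0 := by
      apply tower_van_zero g (m 0) (xc 0) (hxc 0 (by omega))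
      · apply Polynomial.natDegree_sum_le_of_forall_le
        intro j hj
        exact le_trans (Polynomial.natDegree_C_mul_le _ _)
          (le_trans (hdeg j (by simp at hj; omega)) (hmono 0 j (by omega) (by simp at hj; omega)))
      · intro i hi
        rw [hgev]
        exact hvan 0 (by omega) i hi
    have hg0 : ∀ x : F, ∑ j ∈ range (ν + 2), (p j).eval x * c ^ j = 0 := by
      intro x
      rw [← hgev, hg, Polynomial.eval_zero]
    set r : ℕ → Polynomial F :=
      fun j' => ∑ j ∈ Ico (j' + 1) (ν + 2), Polynomial.C (c ^ (j - 1 - j')) * p j with hrdef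
    have hrzero : ∀ j', j' ≤ ν → r j' = 0 := by
      apply IH (fun j => m (j + 1)) (fun j => y (j + 1)) (fun n => xc (n + 1))
      · intro j hj; exact hm (j + 1) (by omega)
      · intro j j' hj hj' h
        have := hy (j + 1) (j' + 1) (by omega) (by omega) h
        omega
      · intro n hn; exact hxc (n + 1) (by omega)
      · intro j' hj'
        apply Polynomial.natDegree_sum_le_of_forall_le
        intro j hj
        simp only [mem_Ico] at hj
        exact le_trans (Polynomial.natDegree_C_mul_le _ _)
          (le_trans (hdeg j (by omega)) (hmono (j' + 1) j hj.1 (by omega)))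
      · intro n hn i hi
        set x := xc (n + 1) i with hx
        set Y := y (n + 1) with hY
        have hYc : Y - c ≠ 0 := by
          refine sub_ne_zero.mpr (fun h => ?_)
          have := hy (n + 1) 0 (by omega) (by omega) h
          omega
        have hrev : ∀ j', (r j').eval x =
            ∑ j ∈ Ico (j' + 1) (ν + 2), (p j).eval x * c ^ (j - 1 - j') := by
          intro j'
          rw [hrdef]
          simp only
          rw [Polynomial.eval_finset_sum]
          exact Finset.sum_congr rfl (by intros; simp [mul_comm])
        have e1 : ∑ j' ∈ range (ν + 1), (r j').eval x * Y ^ j' =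
            ∑ j ∈ range (ν + 2), (p j).eval x *
              ∑ j' ∈ range j, Y ^ j' * c ^ (j - 1 - j') := by
          have swap := Finset.sum_Ico_Ico_comm' 0 (ν + 2)
            (fun j' j => (p j).eval x * (Y ^ j' * c ^ (j - 1 - j')))
          simp only [Nat.Ico_zero_eq_range] at swap
          calc ∑ j' ∈ range (ν + 1), (r j').eval x * Y ^ j'
              = ∑ j' ∈ range (ν + 1), ∑ j ∈ Ico (j' + 1) (ν + 2),
                  (p j).eval x * (Y ^ j' * c ^ (j - 1 - j')) := by
                refine Finset.sum_congr rfl (fun j' _ => ?_)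
                rw [hrev, Finset.sum_mul]
                exact Finset.sum_congr rfl (fun j _ => by ring)
            _ = ∑ j' ∈ range (ν + 2), ∑ j ∈ Ico (j' + 1) (ν + 2),
                  (p j).eval x * (Y ^ j' * c ^ (j - 1 - j')) := by
                symm
                rw [Finset.sum_range_succ]
                simp
            _ = ∑ j ∈ range (ν + 2), ∑ j' ∈ range j,
                  (p j).eval x * (Y ^ j' * c ^ (j - 1 - j')) := swap
            _ = _ := by
                refine Finset.sum_congr rfl (fun j _ => ?_)
                rw [Finset.mul_sum]
        have e2 : (∑ j' ∈ range (ν + 1), (r j').eval x * Y ^ j') * (Y - c) = 0 := by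
          rw [e1, Finset.sum_mul]
          have : ∀ j ∈ range (ν + 2),
              (p j).eval x * (∑ j' ∈ range j, Y ^ j' * c ^ (j - 1 - j')) * (Y - c)
              = (p j).eval x * Y ^ j - (p j).eval x * c ^ j := by
            intro j _
            rw [mul_assoc, geom_sum₂_mul, mul_sub]
          rw [Finset.sum_congr rfl this, Finset.sum_sub_distrib]
          have h1 : ∑ j ∈ range (ν + 2), (p j).eval x * Y ^ j = 0 := hvan (n + 1) (by omega) i hi
          rw [h1, hg0 x, sub_zero]
        rcases mul_eq_zero.mp e2 with h | h
        · exact h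
        · exact absurd h hYc
    -- positive indices
    have step : ∀ j, 1 ≤ j → j ≤ ν + 1 →
        (∀ j'', j < j'' → j'' ≤ ν + 1 → p j'' = 0) → p j = 0 := by
      intro j h1 h2 hall
      have h0 := hrzero (j - 1) (by omega)
      rw [hrdef] at h0
      simp only at h0
      have hj1 : j - 1 + 1 = j := by omega
      rw [hj1] at h0
      rw [Finset.sum_eq_sum_Ico_succ_bot (by omega : j < ν + 2)] at h0
      have hrest : ∑ j'' ∈ Ico (j + 1) (ν + 2), Polynomial.C (c ^ (j'' - 1 - (j - 1))) * p j'' = 0 := by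
        apply Finset.sum_eq_zero
        intro j'' hj''
        simp only [mem_Ico] at hj''
        rw [hall j'' (by omega) (by omega), mul_zero]
      rw [hrest, add_zero] at h0
      have : j - 1 - (j - 1) = 0 := by omega
      rw [this] at h0
      simpa using h0
    have hp_pos : ∀ t j, 1 ≤ j → j ≤ ν + 1 → ν + 1 - j ≤ t → p j = 0 := by
      intro t
      induction t with
      | zero =>
        intro j h1 h2 h3
        exact step j h1 h2 (fun j'' ha hb => absurd hb (by omega))
      | succ t iht =>
        intro j h1 h2 h3
        exact step j h1 h2 (fun j'' ha hb => iht j'' (by omega) hb (by omega))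
    have hp0 : p 0 = 0 := by
      have := hg.symm
      rw [hgdef, Finset.sum_range_succ'] at this
      have hz : ∑ j ∈ range (ν + 1), Polynomial.C (c ^ (j + 1)) * p (j + 1) = 0 := by
        apply Finset.sum_eq_zero
        intro j hj
        simp only [mem_range] at hj
        rw [hp_pos (ν + 1) (j + 1) (by omega) (by omega) (by omega), mul_zero]
      rw [hz, zero_add] at this
      simpa using this.symm
    intro j hj
    rcases Nat.eq_zero_or_pos j with rfl | hjpos
    · exact hp0
    · exact hp_pos (ν + 1) j hjpos hj (by omega)

end Aux

/-- For a generalized x-tower set `Ξ = {u_{mn} = (x_{mn}, y_n) : (m,n) ∈ S}` with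
`S = L_x(m₀,…,m_ν)`, `m₀ > ⋯ > m_ν ≥ 0`, the monomials `{x^i y^j : (i,j) ∈ S}` form an
interpolation basis: for any prescribed values there is a unique polynomial in their span
attaining those values at the points of `Ξ`. Here `xc n i` denotes the abscissa `x_{in}`. -/
theorem stmt_15 {F : Type*} [Field F]
    (ν : ℕ) (m : ℕ → ℕ) (y : ℕ → F) (xc : ℕ → ℕ → F)
    (hm : ∀ j, j < ν → m (j + 1) < m j)
    (hy : ∀ j j', j ≤ ν → j' ≤ ν → y j = y j' → j = j')
    (hxc : ∀ n, n ≤ ν → ∀ i i', i ≤ m n → i' ≤ m n → xc n i = xc n i' → i = i') :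
    ∀ vals : {q : ℕ × ℕ // q.2 ≤ ν ∧ q.1 ≤ m q.2} → F,
      ∃! p : MvPolynomial (Fin 2) F,
        p ∈ Submodule.span F
            (Set.range (fun q : {q : ℕ × ℕ // q.2 ≤ ν ∧ q.1 ≤ m q.2} =>
              (X 0 ^ q.1.1 * X 1 ^ q.1.2 : MvPolynomial (Fin 2) F))) ∧
          ∀ q : {q : ℕ × ℕ // q.2 ≤ ν ∧ q.1 ≤ m q.2},
            MvPolynomial.eval ![xc q.1.2 q.1.1, y q.1.2] p = vals q := by
  classical
  set T := {q : ℕ × ℕ // q.2 ≤ ν ∧ q.1 ≤ m q.2} with hT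
  have hmono := tower_m_mono ν m hm
  haveI : Fintype T := by
    have hfin : Set.Finite {q : ℕ × ℕ | q.2 ≤ ν ∧ q.1 ≤ m q.2} := by
      apply Set.Finite.subset (Set.finite_Iic (((Finset.range (ν + 1)).sup m), ν))
      rintro ⟨a, b⟩ ⟨h1, h2⟩
      refine Prod.mk_le_mk.mpr ⟨le_trans h2 (Finset.le_sup (by simp; omega)), h1⟩
    exact hfin.fintype
  -- sum over T as a double sum
  have sum_T : ∀ f : ℕ → ℕ → F,
      ∑ q : T, f q.1.1 q.1.2 =
        ∑ j ∈ Finset.range (ν + 1), ∑ i ∈ Finset.range (m j + 1), f i j := by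
    intro f
    rw [Finset.sum_sigma']
    apply Finset.sum_bij' (i := fun (q : T) (_ : q ∈ Finset.univ) => (⟨q.1.2, q.1.1⟩ : Σ _ : ℕ, ℕ))
      (j := fun x hx => (⟨(x.2, x.1), by
        simp only [Finset.mem_sigma, Finset.mem_range] at hx
        exact ⟨Nat.lt_succ_iff.mp hx.1, Nat.lt_succ_iff.mp hx.2⟩⟩ : T))
    case hi =>
      rintro ⟨⟨a1, a2⟩, ⟨h1, h2⟩⟩ ha
      simp only [Finset.mem_sigma, Finset.mem_range]
      exact ⟨Nat.lt_succ_of_le h1, Nat.lt_succ_of_le h2⟩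
    case hj => intro a ha; exact Finset.mem_univ _
    case left_neg => intro a ha; rfl
    case right_neg => intro a ha; rfl
    case h => intro a ha; rfl
  -- the evaluation matrix
  set M : Matrix T T F := fun q q' => xc q.1.2 q.1.1 ^ q'.1.1 * y q.1.2 ^ q'.1.2 with hM
  set E := M.mulVecLin with hE
  have hEapp : ∀ (cf : T → F) (q : T),
      E cf q = ∑ q' : T, cf q' * (xc q.1.2 q.1.1 ^ q'.1.1 * y q.1.2 ^ q'.1.2) := by
    intro cf q
    simp only [hE, Matrix.mulVecLin_apply, Matrix.mulVec, dotProduct, hM]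
    exact Finset.sum_congr rfl (fun q' _ => by ring)
  -- injectivity of E
  have hEinj : Function.Injective E := by
    rw [← LinearMap.ker_eq_bot, LinearMap.ker_eq_bot']
    intro cf hcf
    set cval : ℕ → ℕ → F :=
      fun i j => if h : j ≤ ν ∧ i ≤ m j then cf ⟨(i, j), h⟩ else 0 with hcval
    set p : ℕ → Polynomial F :=
      fun j => ∑ i ∈ Finset.range (m j + 1), Polynomial.C (cval i j) * Polynomial.X ^ i with hp
    have hpz : ∀ j, j ≤ ν → p j = 0 := by
      apply tower_key ν m y xc hm hy hxc
      · intro j hj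
        apply Polynomial.natDegree_sum_le_of_forall_le
        intro i hi
        simp only [Finset.mem_range] at hi
        calc (Polynomial.C (cval i j) * Polynomial.X ^ i).natDegree
            ≤ (Polynomial.X ^ i : Polynomial F).natDegree := Polynomial.natDegree_C_mul_le _ _
          _ ≤ i := Polynomial.natDegree_X_pow_le i
          _ ≤ m j := by omega
      · intro n hn i hi
        have h0 : ∑ q' : T, cf q' * (xc n i ^ q'.1.1 * y n ^ q'.1.2) = 0 := by
          have h1 := hEapp cf ⟨(i, n), ⟨hn, hi⟩⟩
          have h2 : E cf ⟨(i, n), ⟨hn, hi⟩⟩ = 0 := by rw [hcf]; rfl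
          rw [h2] at h1
          exact h1.symm
        calc ∑ j ∈ Finset.range (ν + 1), (p j).eval (xc n i) * y n ^ j
              = ∑ j ∈ Finset.range (ν + 1), ∑ i' ∈ Finset.range (m j + 1),
                  cval i' j * (xc n i ^ i' * y n ^ j) := by
                refine Finset.sum_congr rfl (fun j _ => ?_)
                rw [hp]
                simp only
                rw [Polynomial.eval_finset_sum, Finset.sum_mul]
                refine Finset.sum_congr rfl (fun i' _ => ?_)
                simp only [Polynomial.eval_mul, Polynomial.eval_C, Polynomial.eval_pow,
                  Polynomial.eval_X]
                ring
            _ = ∑ q' : T, cval q'.1.1 q'.1.2 * (xc n i ^ q'.1.1 * y n ^ q'.1.2) :=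
                (sum_T _).symm
            _ = ∑ q' : T, cf q' * (xc n i ^ q'.1.1 * y n ^ q'.1.2) := by
                refine Finset.sum_congr rfl (fun q' _ => ?_)
                rcases q' with ⟨⟨a, b⟩, hq'⟩
                rw [hcval]
                simp only [dif_pos hq']
            _ = 0 := h0
    funext q
    rcases q with ⟨⟨a, b⟩, hq⟩
    have hcoeff : (p b).coeff a = cval a b := by
      rw [hp]
      simp only
      rw [Polynomial.finset_sum_coeff]
      rw [Finset.sum_eq_single a]
      · simp
      · intro i _ hia
        simp [Polynomial.coeff_X_pow, Ne.symm hia]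
      · intro ha
        exact absurd (Finset.mem_range.mpr (Nat.lt_succ_of_le hq.2)) ha
    have : cval a b = 0 := by
      rw [← hcoeff, hpz b hq.1, Polynomial.coeff_zero]
    rw [hcval] at this
    simpa only [dif_pos hq, Pi.zero_apply] using this
  have hEsurj : Function.Surjective E := (LinearMap.injective_iff_surjective).mp hEinj
  -- evaluation of a combination of monomials
  have evalsum : ∀ (cf : T → F) (q : T),
      MvPolynomial.eval ![xc q.1.2 q.1.1, y q.1.2]
        (∑ q' : T, cf q' • (X 0 ^ q'.1.1 * X 1 ^ q'.1.2 : MvPolynomial (Fin 2) F)) = E cf q := by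
    intro cf q
    rw [map_sum, hEapp]
    refine Finset.sum_congr rfl (fun q' _ => ?_)
    rw [smul_eval]
    congr 1
    simp
  intro vals
  obtain ⟨cf, hcf⟩ := hEsurj vals
  refine ⟨∑ q' : T, cf q' • (X 0 ^ q'.1.1 * X 1 ^ q'.1.2 : MvPolynomial (Fin 2) F), ⟨?_, ?_⟩, ?_⟩
  · exact Submodule.sum_mem _ (fun q' _ =>
      Submodule.smul_mem _ _ (Submodule.subset_span ⟨q', rfl⟩))
  · intro q
    rw [evalsum, hcf]
  · rintro p' ⟨hmem, hev⟩
    rw [Submodule.mem_span_range_iff_exists_fun] at hmem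
    obtain ⟨d, hd⟩ := hmem
    have hEd : E d = vals := by
      funext q
      rw [← hev q, ← hd, evalsum]
    have : d = cf := hEinj (by rw [hEd, hcf])
    rw [← hd, this]
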